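/- In the power of a cycle C_n^k with 2k + 2 ≤ n ≤ 3k + 1, every induced path on 3 vertices is contained in an induced 4-cycle; consequently every biclique of C_n^k induces a C_4. -/

import Mathlib

open SimpleGraph

/-- The `k`-th power of a path on `n` vertices: `v_i ~ v_j` iff `0 < |i - j| ≤ k`. -/
def pathPower (n k : ℕ) : SimpleGraph (Fin n) :=
  SimpleGraph.fromRel (fun i j => i.val ≤ j.val ∧ j.val ≤ i.val + k)

/-- The cyclic distance between two vertices of `ZMod n`. -/
def cdist (n : ℕ) (i j : ZMod n) : ℕ := min (i - j).val (j - i).val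

/-- The `k`-th power of a cycle on `n` vertices: `v_i ~ v_j` iff the
cyclic distance between `i` and `j` is between `1` and `k`. -/
def cyclePower (n k : ℕ) : SimpleGraph (ZMod n) :=
  SimpleGraph.fromRel (fun i j => cdist n i j ≤ k)

/-- `S` induces a complete bipartite subgraph of `G`. -/
def IsCompleteBipartiteSet {V : Type*} (G : SimpleGraph V) (S : Set V) : Prop :=
  ∃ A B : Set V, A ∪ B = S ∧ Disjoint A B ∧
    (∀ a ∈ A, ∀ b ∈ B, G.Adj a b) ∧
    (∀ a ∈ A, ∀ a' ∈ A, ¬ G.Adj a a') ∧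
    (∀ b ∈ B, ∀ b' ∈ B, ¬ G.Adj b b')

/-- A biclique: a maximal set of vertices inducing a complete bipartite
subgraph with at least one edge. -/
def IsBiclique {V : Type*} (G : SimpleGraph V) (S : Set V) : Prop :=
  IsCompleteBipartiteSet G S ∧ (∃ u ∈ S, ∃ v ∈ S, G.Adj u v) ∧
  ∀ T : Set V, S ⊆ T → IsCompleteBipartiteSet G T → T = S

/-- A set is monochromatic under a colouring. -/
def Monochromatic {V α : Type*} (c : V → α) (S : Set V) : Prop :=
  ∃ a, ∀ v ∈ S, c v = a

/-- `G` admits a biclique-colouring with `m` colours. -/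
def BicliqueColorable {V : Type*} (G : SimpleGraph V) (m : ℕ) : Prop :=
  ∃ c : V → Fin m, ∀ S : Set V, IsBiclique G S → ¬ Monochromatic c S

/-- The biclique-chromatic number. -/
noncomputable def bicliqueChromaticNumber {V : Type*} (G : SimpleGraph V) : ℕ :=
  sInf {m | BicliqueColorable G m}

/-- `a`, `b`, `c` induce a path on three vertices (with middle vertex `b`). -/
def IsInducedP3 {V : Type*} (G : SimpleGraph V) (a b c : V) : Prop :=
  a ≠ b ∧ b ≠ c ∧ a ≠ c ∧ G.Adj a b ∧ G.Adj b c ∧ ¬ G.Adj a c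

/-- `a`, `b`, `c`, `d` induce a four-cycle (in this cyclic order). -/
def IsInducedC4 {V : Type*} (G : SimpleGraph V) (a b c d : V) : Prop :=
  a ≠ b ∧ a ≠ c ∧ a ≠ d ∧ b ≠ c ∧ b ≠ d ∧ c ≠ d ∧
  G.Adj a b ∧ G.Adj b c ∧ G.Adj c d ∧ G.Adj d a ∧ ¬ G.Adj a c ∧ ¬ G.Adj b d

section Helpers
variable {n k : ℕ}

lemma adj_iff [NeZero n] (i j : ZMod n) :
    (cyclePower n k).Adj i j ↔ i ≠ j ∧ ((i - j).val ≤ k ∨ (j - i).val ≤ k) := by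
  simp only [cyclePower, SimpleGraph.fromRel_adj, cdist, min_le_iff]
  tauto

lemma val_coe_self [NeZero n] (x : ZMod n) : ((x.val : ℕ) : ZMod n) = x := by simp

lemma neg_val' [NeZero n] {x : ZMod n} (h : x ≠ 0) : (-x).val = n - x.val := by
  rw [ZMod.neg_val]; simp [h]

lemma adj_of_sub (hn : 2 * k + 2 ≤ n) {x y : ZMod n} (m : ℕ)
    (h1 : 1 ≤ m) (h2 : m ≤ k) (he : x - y = (m : ZMod n)) :
    (cyclePower n k).Adj x y := by
  haveI : NeZero n := ⟨by omega⟩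
  have hm : ((m : ZMod n)).val = m := ZMod.val_natCast_of_lt (by omega)
  rw [adj_iff]
  refine ⟨fun hxy => ?_, Or.inl (by rw [he, hm]; exact h2)⟩
  rw [hxy, sub_self] at he
  have : (0 : ZMod n).val = m := by rw [he, hm]
  simp [ZMod.val_zero] at this
  omega

lemma nadj_of_sub (hn : 2 * k + 2 ≤ n) {x y : ZMod n} (m : ℕ)
    (h1 : k < m) (h2 : m + k < n) (he : x - y = (m : ZMod n)) :
    x ≠ y ∧ ¬ (cyclePower n k).Adj x y := by
  haveI : NeZero n := ⟨by omega⟩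
  have hm : ((m : ZMod n)).val = m := ZMod.val_natCast_of_lt (by omega)
  have hne : x ≠ y := by
    intro hxy; rw [hxy, sub_self] at he
    have : (0 : ZMod n).val = m := by rw [he, hm]
    simp [ZMod.val_zero] at this; omega
  have h0 : x - y ≠ 0 := sub_ne_zero.mpr hne
  have hv1 : (x - y).val = m := by rw [he, hm]
  have hv2 : (y - x).val = n - m := by
    have : y - x = -(x - y) := by ring
    rw [this, neg_val' h0, hv1]
  refine ⟨hne, ?_⟩
  rw [adj_iff]
  rintro ⟨-, h | h⟩ <;> omega

/-- two vertices whose difference is a difference of two small naturals are adjacent -/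
lemma diff_adj (hn : 2 * k + 2 ≤ n) {x x' : ZMod n} (p q : ℕ)
    (hp : p ≤ k) (hq : q ≤ k) (he : x - x' = (p : ZMod n) - (q : ZMod n))
    (hne : x ≠ x') : (cyclePower n k).Adj x x' := by
  haveI : NeZero n := ⟨by omega⟩
  rcases Nat.lt_trichotomy p q with h | rfl | h
  · have : x' - x = ((q - p : ℕ) : ZMod n) := by
      rw [Nat.cast_sub h.le]; rw [show x' - x = -(x - x') by ring, he]; ring
    exact (adj_of_sub hn (q - p) (by omega) (by omega) this).symm
  · rw [sub_self] at he
    exact absurd (sub_eq_zero.mp he) hne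
  · have : x - x' = ((p - q : ℕ) : ZMod n) := by rw [Nat.cast_sub h.le, he]
    exact adj_of_sub hn (p - q) (by omega) (by omega) this

lemma same1 (hn : 2 * k + 2 ≤ n) {x x' y : ZMod n}
    (h : (x - y).val ≤ k) (h' : (x' - y).val ≤ k) (hne : x ≠ x') :
    (cyclePower n k).Adj x x' := by
  haveI : NeZero n := ⟨by omega⟩
  refine diff_adj hn (x - y).val (x' - y).val h h' ?_ hne
  rw [val_coe_self, val_coe_self]; ring

lemma same2 (hn : 2 * k + 2 ≤ n) {x x' y : ZMod n}
    (h : (y - x).val ≤ k) (h' : (y - x').val ≤ k) (hne : x ≠ x') :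
    (cyclePower n k).Adj x x' := by
  haveI : NeZero n := ⟨by omega⟩
  refine diff_adj hn (y - x').val (y - x).val h' h ?_ hne
  rw [val_coe_self, val_coe_self]; ring

lemma claw (hn : 2 * k + 2 ≤ n) {y x1 x2 x3 : ZMod n}
    (h1 : (cyclePower n k).Adj y x1) (h2 : (cyclePower n k).Adj y x2)
    (h3 : (cyclePower n k).Adj y x3)
    (n12 : ¬ (cyclePower n k).Adj x1 x2) (n13 : ¬ (cyclePower n k).Adj x1 x3)
    (n23 : ¬ (cyclePower n k).Adj x2 x3) :
    x1 = x2 ∨ x1 = x3 ∨ x2 = x3 := by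
  haveI : NeZero n := ⟨by omega⟩
  by_contra hc
  push_neg at hc
  obtain ⟨e12, e13, e23⟩ := hc
  rw [adj_iff] at h1 h2 h3
  rcases h1.2 with a1 | a1 <;> rcases h2.2 with a2 | a2 <;> rcases h3.2 with a3 | a3
  · exact n12 (same2 hn a1 a2 e12)
  · exact n12 (same2 hn a1 a2 e12)
  · exact n13 (same2 hn a1 a3 e13)
  · exact n23 (same1 hn a2 a3 e23)
  · exact n23 (same2 hn a2 a3 e23)
  · exact n13 (same1 hn a1 a3 e13)
  · exact n12 (same1 hn a1 a2 e12)
  · exact n12 (same1 hn a1 a2 e12)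

end Helpers
section Key
variable {n k : ℕ}

lemma key (hn1 : 2 * k + 2 ≤ n) (hn2 : n ≤ 3 * k + 1) (b : ZMod n) (s t : ℕ)
    (hs1 : 1 ≤ s) (hsk : s ≤ k) (ht1 : 1 ≤ t) (htk : t ≤ k)
    (hst : k + 1 ≤ s + t) (hstn : s + t + k + 1 ≤ n) :
    ∃ d, IsInducedC4 (cyclePower n k) (b + (s : ZMod n)) b (b - (t : ZMod n)) d := by
  haveI : NeZero n := ⟨by omega⟩
  set a := b + (s : ZMod n) with ha
  set c := b - (t : ZMod n) with hc
  have hab : (cyclePower n k).Adj a b := adj_of_sub hn1 s hs1 hsk (by rw [ha]; ring)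
  have hbc : (cyclePower n k).Adj b c := adj_of_sub hn1 t ht1 htk (by rw [hc]; ring)
  have hac : a ≠ c ∧ ¬ (cyclePower n k).Adj a c := by
    refine nadj_of_sub hn1 (s + t) (by omega) (by omega) ?_
    rw [ha, hc]; push_cast; ring
  by_cases hcase : n ≤ 2 * k + 1 + t
  · -- d = b + (k+1)
    refine ⟨b + ((k + 1 : ℕ) : ZMod n), ?_, ?_, ?_, ?_, ?_, ?_, hab, hbc, ?_, ?_, hac.2, ?_⟩
    · exact hab.ne
    · exact hac.1
    · -- a ≠ d
      exact (adj_of_sub hn1 (k + 1 - s) (by omega) (by omega)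
        (by rw [Nat.cast_sub (by omega), ha]; ring) :
        (cyclePower n k).Adj (b + ((k + 1 : ℕ) : ZMod n)) a).ne.symm
    · exact hbc.ne
    · -- b ≠ d
      exact (nadj_of_sub hn1 (k + 1) (by omega) (by omega)
        (by ring) : (b + ((k+1:ℕ) : ZMod n)) ≠ b ∧ _).1.symm
    · -- c ≠ d
      refine (adj_of_sub hn1 (n - (k + 1 + t)) (by omega) (by omega) ?_ :
        (cyclePower n k).Adj c (b + ((k+1:ℕ) : ZMod n))).ne
      rw [Nat.cast_sub (by omega), hc, ZMod.natCast_self]; push_cast; ring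
    · -- adj c d
      exact adj_of_sub hn1 (n - (k + 1 + t)) (by omega) (by omega)
        (by rw [Nat.cast_sub (by omega), hc, ZMod.natCast_self]; push_cast; ring)
    · -- adj d a
      exact adj_of_sub hn1 (k + 1 - s) (by omega) (by omega)
        (by rw [Nat.cast_sub (by omega), ha]; ring)
    · -- ¬ adj b d
      intro h
      exact (nadj_of_sub hn1 (k + 1) (by omega) (by omega)
        (by ring : (b + ((k+1:ℕ) : ZMod n)) - b = ((k+1:ℕ) : ZMod n))).2 h.symm
  · -- d = b - (t + k)
    refine ⟨b - ((t + k : ℕ) : ZMod n), ?_, ?_, ?_, ?_, ?_, ?_, hab, hbc, ?_, ?_, hac.2, ?_⟩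
    · exact hab.ne
    · exact hac.1
    · -- a ≠ d
      exact (adj_of_sub hn1 (n - (s + t + k)) (by omega) (by omega)
        (by rw [Nat.cast_sub (by omega), ha, ZMod.natCast_self]; push_cast; ring) :
        (cyclePower n k).Adj (b - ((t+k:ℕ) : ZMod n)) a).ne.symm
    · exact hbc.ne
    · -- b ≠ d
      exact (nadj_of_sub hn1 (t + k) (by omega) (by omega)
        (by ring : b - (b - ((t+k:ℕ) : ZMod n)) = ((t+k:ℕ) : ZMod n))).1
    · -- c ≠ d
      exact (adj_of_sub hn1 k (by omega) le_rfl
        (by rw [hc]; push_cast; ring : c - (b - ((t+k:ℕ) : ZMod n)) = (k : ZMod n))).ne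
    · -- adj c d
      exact adj_of_sub hn1 k (by omega) le_rfl
        (by rw [hc]; push_cast; ring)
    · -- adj d a
      exact adj_of_sub hn1 (n - (s + t + k)) (by omega) (by omega)
        (by rw [Nat.cast_sub (by omega), ha, ZMod.natCast_self]; push_cast; ring)
    · -- ¬ adj b d
      exact (nadj_of_sub hn1 (t + k) (by omega) (by omega)
        (by ring : b - (b - ((t+k:ℕ) : ZMod n)) = ((t+k:ℕ) : ZMod n))).2

end Key
section Main
variable {n k : ℕ}

lemma C4rev {V : Type*} {G : SimpleGraph V} {a b c d : V}
    (h : IsInducedC4 G c b a d) : IsInducedC4 G a b c d := by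
  obtain ⟨h1, h2, h3, h4, h5, h6, e1, e2, e3, e4, ne1, ne2⟩ := h
  exact ⟨h4.symm, h2.symm, h6, h1.symm, h5, h3, e2.symm, e1.symm, e4.symm, e3.symm,
    fun h => ne1 h.symm, ne2⟩

lemma vsum [NeZero n] {x y : ZMod n} (hxy : x ≠ y) : (x - y).val + (y - x).val = n := by
  have h0 : x - y ≠ 0 := sub_ne_zero.mpr hxy
  have hyx : y - x = -(x - y) := by ring
  rw [hyx, neg_val' h0]
  have h1 := ZMod.val_lt (x - y)
  have h2 : (x - y).val ≠ 0 := fun h => h0 ((ZMod.val_eq_zero _).mp h)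
  omega

lemma vpos [NeZero n] {x y : ZMod n} (hxy : x ≠ y) : 1 ≤ (x - y).val := by
  have h0 : x - y ≠ 0 := sub_ne_zero.mpr hxy
  have : (x - y).val ≠ 0 := fun h => h0 ((ZMod.val_eq_zero _).mp h)
  omega

lemma P3toC4 (hn1 : 2 * k + 2 ≤ n) (hn2 : n ≤ 3 * k + 1) {a b c : ZMod n}
    (h : IsInducedP3 (cyclePower n k) a b c) :
    ∃ d, IsInducedC4 (cyclePower n k) a b c d := by
  haveI : NeZero n := ⟨by omega⟩
  obtain ⟨hab, hbc, hac, eab, ebc, nac⟩ := h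
  rw [adj_iff] at eab ebc
  have hnac : k < (a - c).val ∧ k < (c - a).val := by
    rw [adj_iff] at nac
    push_neg at nac
    have := nac hac
    omega
  rcases eab.2 with ha | ha <;> rcases ebc.2 with hb | hb
  · -- a = b + s, c = b - t
    set s := (a - b).val with hs
    set t := (b - c).val with ht
    have hbs : b + (s : ZMod n) = a := by rw [hs, val_coe_self]; ring
    have hct : b - (t : ZMod n) = c := by rw [ht, val_coe_self]; ring
    have hacv : a - c = ((s + t : ℕ) : ZMod n) := by
      rw [hs, ht]; push_cast [val_coe_self]; ring
    have hsum : (a - c).val = s + t := by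
      rw [hacv, ZMod.val_natCast_of_lt (by omega)]
    have hvlt := ZMod.val_lt (a - c)
    have hca : (c - a).val = n - (s + t) := by
      have := vsum hac; omega
    obtain ⟨d, hd⟩ := key hn1 hn2 b s t (vpos hab) ha (vpos hbc) hb
      (by omega) (by omega)
    rw [hbs, hct] at hd
    exact ⟨d, hd⟩
  · exfalso
    refine nac (diff_adj hn1 (a - b).val (c - b).val ha hb ?_ hac)
    rw [val_coe_self, val_coe_self]; ring
  · exfalso
    refine nac (diff_adj hn1 (b - c).val (b - a).val hb ha ?_ hac)
    rw [val_coe_self, val_coe_self]; ring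
  · -- c = b + s, a = b - t
    set s := (c - b).val with hs
    set t := (b - a).val with ht
    have hbs : b + (s : ZMod n) = c := by rw [hs, val_coe_self]; ring
    have hct : b - (t : ZMod n) = a := by rw [ht, val_coe_self]; ring
    have hacv : c - a = ((s + t : ℕ) : ZMod n) := by
      rw [hs, ht]; push_cast [val_coe_self]; ring
    have hsum : (c - a).val = s + t := by
      rw [hacv, ZMod.val_natCast_of_lt (by omega)]
    have hvlt := ZMod.val_lt (c - a)
    have hca : (a - c).val = n - (s + t) := by
      have := vsum hac; omega
    obtain ⟨d, hd⟩ := key hn1 hn2 b s t (vpos (Ne.symm hbc)) hb (vpos (Ne.symm hab)) ha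
      (by omega) (by omega)
    rw [hbs, hct] at hd
    exact ⟨d, C4rev hd⟩

lemma edgeP3 (hn1 : 2 * k + 2 ≤ n) {u v : ZMod n} [NeZero n]
    (hne : u ≠ v) (huv : (u - v).val ≤ k) :
    ∃ w, IsInducedP3 (cyclePower n k) u v w := by
  set s := (u - v).val with hs
  have hs1 : 1 ≤ s := vpos hne
  refine ⟨v - ((k + 1 - s : ℕ) : ZMod n), ?_⟩
  have euv : (cyclePower n k).Adj u v :=
    adj_of_sub hn1 s hs1 huv (by rw [hs, val_coe_self])
  have evw : (cyclePower n k).Adj v (v - ((k + 1 - s : ℕ) : ZMod n)) :=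
    adj_of_sub hn1 (k + 1 - s) (by omega) (by omega) (by ring)
  have nuw : u ≠ v - ((k + 1 - s : ℕ) : ZMod n) ∧
      ¬ (cyclePower n k).Adj u (v - ((k + 1 - s : ℕ) : ZMod n)) := by
    refine nadj_of_sub hn1 (k + 1) (by omega) (by omega) ?_
    have : u - v = (s : ZMod n) := by rw [hs, val_coe_self]
    rw [Nat.cast_sub (by omega), show u - (v - (((k+1:ℕ) : ZMod n) - (s : ZMod n))) =
      (u - v) + (((k+1:ℕ) : ZMod n) - (s : ZMod n)) by ring, this]
    ring
  exact ⟨hne, evw.ne, nuw.1, euv, evw, nuw.2⟩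

lemma C4CBS {V : Type*} {G : SimpleGraph V} {w x y z : V}
    (h : IsInducedC4 G w x y z) :
    IsCompleteBipartiteSet G ({w, x, y, z} : Set V) := by
  obtain ⟨h1, h2, h3, h4, h5, h6, e1, e2, e3, e4, ne1, ne2⟩ := h
  refine ⟨{w, y}, {x, z}, ?_, ?_, ?_, ?_, ?_⟩
  · ext v; simp; tauto
  · rw [Set.disjoint_left]
    rintro v (rfl | rfl) <;>
      simp only [Set.mem_insert_iff, Set.mem_singleton_iff] <;> push_neg
    · exact ⟨h1, h3⟩
    · exact ⟨fun h => h4 h.symm, h6⟩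
  · rintro a (rfl | rfl) b (rfl | rfl)
    · exact e1
    · exact e4.symm
    · exact e2.symm
    · exact e3
  · rintro a (rfl | rfl) b (rfl | rfl)
    · exact fun h => G.irrefl h
    · exact ne1
    · exact fun h => ne1 h.symm
    · exact fun h => G.irrefl h
  · rintro a (rfl | rfl) b (rfl | rfl)
    · exact fun h => G.irrefl h
    · exact ne2
    · exact fun h => ne2 h.symm
    · exact fun h => G.irrefl h

end Main
section Part2
variable {n k : ℕ}

lemma part2aux (hn1 : 2 * k + 2 ≤ n) (hn2 : n ≤ 3 * k + 1)
    (S A B : Set (ZMod n))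
    (hUn : A ∪ B = S) (hDisj : Disjoint A B)
    (hCross : ∀ a ∈ A, ∀ b ∈ B, (cyclePower n k).Adj a b)
    (hA : ∀ a ∈ A, ∀ a' ∈ A, ¬ (cyclePower n k).Adj a a')
    (hB : ∀ b ∈ B, ∀ b' ∈ B, ¬ (cyclePower n k).Adj b b')
    (hMax : ∀ T : Set (ZMod n), S ⊆ T → IsCompleteBipartiteSet (cyclePower n k) T → T = S)
    (u : ZMod n) (hu : u ∈ A) (v : ZMod n) (hv : v ∈ B)
    (huv : (cyclePower n k).Adj u v) :
    ∃ w x y z : ZMod n, IsInducedC4 (cyclePower n k) w x y z ∧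
      S = {w, x, y, z} := by
  haveI : NeZero n := ⟨by omega⟩
  have memS : ∀ x, x ∈ S ↔ x ∈ A ∨ x ∈ B := by
    intro x; rw [← hUn]; exact Set.mem_union x A B
  have clawA : ∀ x ∈ A, ∀ a' ∈ A, a' ≠ u → x = u ∨ x = a' := by
    intro x hx a' ha' hne
    rcases claw hn1 huv.symm (hCross a' ha' v hv).symm (hCross x hx v hv).symm
      (hA u hu a' ha') (hA u hu x hx) (hA a' ha' x hx) with h | h | h
    · exact absurd h.symm hne
    · exact Or.inl h.symm
    · exact Or.inr h.symm
  have clawB : ∀ x ∈ B, ∀ b' ∈ B, b' ≠ v → x = v ∨ x = b' := by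
    intro x hx b' hb' hne
    rcases claw hn1 huv (hCross u hu b' hb') (hCross u hu x hx)
      (hB v hv b' hb') (hB v hv x hx) (hB b' hb' x hx) with h | h | h
    · exact absurd h.symm hne
    · exact Or.inl h.symm
    · exact Or.inr h.symm
  by_cases hA2 : ∃ a' ∈ A, a' ≠ u <;> by_cases hB2 : ∃ b' ∈ B, b' ≠ v
  · -- K_{2,2}
    obtain ⟨a', ha', hane⟩ := hA2
    obtain ⟨b', hb', hbne⟩ := hB2
    refine ⟨u, v, a', b', ⟨huv.ne, hane.symm, (hCross u hu b' hb').ne,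
      ((hCross a' ha' v hv).ne).symm, hbne.symm, (hCross a' ha' b' hb').ne,
      huv, (hCross a' ha' v hv).symm, hCross a' ha' b' hb',
      (hCross u hu b' hb').symm, hA u hu a' ha', hB v hv b' hb'⟩, ?_⟩
    apply Set.Subset.antisymm
    · intro x hx
      rcases (memS x).1 hx with h | h
      · rcases clawA x h a' ha' hane with rfl | rfl
        · exact Set.mem_insert _ _
        · simp
      · rcases clawB x h b' hb' hbne with rfl | rfl <;> simp
    · intro x hx
      simp only [Set.mem_insert_iff, Set.mem_singleton_iff] at hx
      rcases hx with rfl | rfl | rfl | rfl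
      · exact (memS x).2 (Or.inl hu)
      · exact (memS x).2 (Or.inr hv)
      · exact (memS x).2 (Or.inl ha')
      · exact (memS x).2 (Or.inr hb')
  · -- K_{2,1} : impossible
    exfalso
    push_neg at hB2
    obtain ⟨a', ha', hane⟩ := hA2
    have hP3 : IsInducedP3 (cyclePower n k) u v a' :=
      ⟨huv.ne, (hCross a' ha' v hv).ne.symm, hane.symm, huv,
        (hCross a' ha' v hv).symm, hA u hu a' ha'⟩
    obtain ⟨d, hd⟩ := P3toC4 hn1 hn2 hP3
    have hSsub : S ⊆ ({u, v, a', d} : Set (ZMod n)) := by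
      intro x hx
      rcases (memS x).1 hx with h | h
      · rcases clawA x h a' ha' hane with rfl | rfl <;> simp
      · rw [hB2 x h]; simp
    have hT := hMax _ hSsub (C4CBS hd)
    have hdS : d ∈ S := by rw [← hT]; simp
    rcases (memS d).1 hdS with h | h
    · rcases clawA d h a' ha' hane with rfl | rfl
      · exact hd.2.2.1 rfl
      · exact hd.2.2.2.2.2.1 rfl
    · exact hd.2.2.2.2.1 (hB2 d h).symm
  · -- K_{1,2} : impossible
    exfalso
    push_neg at hA2
    obtain ⟨b', hb', hbne⟩ := hB2
    have hP3 : IsInducedP3 (cyclePower n k) v u b' :=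
      ⟨huv.ne.symm, (hCross u hu b' hb').ne, hbne.symm, huv.symm,
        hCross u hu b' hb', hB v hv b' hb'⟩
    obtain ⟨d, hd⟩ := P3toC4 hn1 hn2 hP3
    have hSsub : S ⊆ ({v, u, b', d} : Set (ZMod n)) := by
      intro x hx
      rcases (memS x).1 hx with h | h
      · rw [hA2 x h]; simp
      · rcases clawB x h b' hb' hbne with rfl | rfl <;> simp
    have hT := hMax _ hSsub (C4CBS hd)
    have hdS : d ∈ S := by rw [← hT]; simp
    rcases (memS d).1 hdS with h | h
    · exact hd.2.2.2.2.1 (hA2 d h).symm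
    · rcases clawB d h b' hb' hbne with rfl | rfl
      · exact hd.2.2.1 rfl
      · exact hd.2.2.2.2.2.1 rfl
  · -- K_{1,1} : impossible
    exfalso
    push_neg at hA2 hB2
    have hSsub2 : S ⊆ ({u, v} : Set (ZMod n)) := by
      intro x hx
      rcases (memS x).1 hx with h | h
      · rw [hA2 x h]; simp
      · rw [hB2 x h]; simp
    have huv' := huv
    rw [adj_iff] at huv'
    rcases huv'.2 with h | h
    · obtain ⟨w, hw⟩ := edgeP3 hn1 huv.ne h
      obtain ⟨d, hd⟩ := P3toC4 hn1 hn2 hw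
      have hSsub : S ⊆ ({u, v, w, d} : Set (ZMod n)) :=
        hSsub2.trans (by intro x hx; simp at hx ⊢; tauto)
      have hT := hMax _ hSsub (C4CBS hd)
      have hwS : w ∈ S := by rw [← hT]; simp
      rcases hSsub2 hwS with h' | h'
      · exact hw.2.2.1 h'.symm
      · exact hw.2.1 (by simpa using h'.symm)
    · obtain ⟨w, hw⟩ := edgeP3 hn1 huv.ne.symm h
      obtain ⟨d, hd⟩ := P3toC4 hn1 hn2 hw
      have hSsub : S ⊆ ({v, u, w, d} : Set (ZMod n)) :=
        hSsub2.trans (by intro x hx; simp at hx ⊢; tauto)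
      have hT := hMax _ hSsub (C4CBS hd)
      have hwS : w ∈ S := by rw [← hT]; simp
      rcases hSsub2 hwS with h' | h'
      · exact hw.2.1 (by simpa using h'.symm)
      · exact hw.2.2.1 h'.symm

end Part2

/-- In `C_n^k` with `2k + 2 ≤ n ≤ 3k + 1`, every induced `P_3` is contained in
an induced `C_4`; consequently every biclique induces a `C_4`. -/
theorem stmt_6 (n k : ℕ) (h1 : 2 * k + 2 ≤ n) (h2 : n ≤ 3 * k + 1) :
    (∀ a b c : ZMod n, IsInducedP3 (cyclePower n k) a b c →
      ∃ w x y z : ZMod n, IsInducedC4 (cyclePower n k) w x y z ∧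
        ({a, b, c} : Set (ZMod n)) ⊆ {w, x, y, z}) ∧
    (∀ S : Set (ZMod n), IsBiclique (cyclePower n k) S →
      ∃ w x y z : ZMod n, IsInducedC4 (cyclePower n k) w x y z ∧
        S = {w, x, y, z}) := by
  constructor
  · intro a b c h
    obtain ⟨d, hd⟩ := P3toC4 h1 h2 h
    refine ⟨a, b, c, d, hd, ?_⟩
    intro x hx
    simp only [Set.mem_insert_iff, Set.mem_singleton_iff] at hx ⊢
    tauto
  · rintro S ⟨⟨A, B, hUn, hDisj, hCross, hA, hB⟩, ⟨u, huS, v, hvS, huv⟩, hMax⟩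
    have memS : ∀ x, x ∈ S ↔ x ∈ A ∨ x ∈ B := by
      intro x; rw [← hUn]; exact Set.mem_union x A B
    rcases (memS u).1 huS with hu | hu
    · have hv : v ∈ B := by
        rcases (memS v).1 hvS with h | h
        · exact absurd huv (hA u hu v h)
        · exact h
      exact part2aux h1 h2 S A B hUn hDisj hCross hA hB hMax u hu v hv huv
    · have hv : v ∈ A := by
        rcases (memS v).1 hvS with h | h
        · exact h
        · exact absurd huv (hB u hu v h)
      exact part2aux h1 h2 S B A (by rw [Set.union_comm]; exact hUn) hDisj.symm
        (fun b hb a ha => (hCross a ha b hb).symm) hB hA hMax u hu v hv huv
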